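/- The only real zeros of the Riemann zeta function are the trivial zeros: for a real number x, riemannZeta(x) = 0 if and only if x = −2·(n+1) for some natural number n. -/

import Mathlib

open Complex Real Set

noncomputable section

/-- The function `(-1)^(n+1)` as a function on `ZMod 2`. -/
private def phi2 : ZMod 2 → ℂ := fun j => if j = 0 then -1 else 1

private lemma phi2_sum : ∑ j, phi2 j = 0 := by
  have : (Finset.univ : Finset (ZMod 2)) = {0, 1} := by decide
  rw [this, Finset.sum_insert (by decide), Finset.sum_singleton]
  norm_num [phi2]

private lemma phi2_odd (k : ℕ) : phi2 ((2 * k + 1 : ℕ) : ZMod 2) = 1 := by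
  have : ((2 * k + 1 : ℕ) : ZMod 2) = 1 := by
    push_cast
    rw [show ((2:ZMod 2) = 0) from rfl]
    ring
  rw [this]; rfl

private lemma phi2_even (k : ℕ) : phi2 ((2 * k : ℕ) : ZMod 2) = -1 := by
  have : ((2 * k : ℕ) : ZMod 2) = 0 := by
    push_cast
    rw [show ((2:ZMod 2) = 0) from rfl]
    ring
  rw [this]; rfl

/-- Hand-rolled Dirichlet eta, as a series of paired terms converging on `re s > 0`. -/
private def etaF (s : ℂ) : ℂ := ∑' k : ℕ, (((2 * k + 1 : ℕ) : ℂ) ^ (-s) - ((2 * k + 2 : ℕ) : ℂ) ^ (-s))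

end

private lemma etaF_term_bound (k : ℕ) {s : ℂ} (hs : 0 < s.re) :
    ‖((2 * k + 1 : ℕ) : ℂ) ^ (-s) - ((2 * k + 2 : ℕ) : ℂ) ^ (-s)‖
      ≤ ‖s‖ * (2 * (k : ℝ) + 1) ^ (-s.re - 1) := by
  set a : ℝ := 2 * k + 1 with ha_def
  set b : ℝ := 2 * k + 2 with hb_def
  have hk0 : (0 : ℝ) ≤ (k : ℝ) := Nat.cast_nonneg k
  have ha : 1 ≤ a := by simp only [ha_def]; linarith
  have hab : a ≤ b := by simp only [ha_def, hb_def]; linarith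
  set g : ℝ → ℂ := fun t => (t : ℂ) ^ (-s) with hg_def
  have hderiv : ∀ t ∈ Icc a b, HasDerivWithinAt g (-s * (t : ℂ) ^ (-s - 1)) (Icc a b) t := by
    intro t ht
    have ht1 : (1 : ℝ) ≤ t := le_trans ha ht.1
    have hmem : (t : ℂ) ∈ slitPlane := by
      apply Complex.ofReal_mem_slitPlane.2; linarith
    exact ((Complex.hasStrictDerivAt_cpow_const hmem).hasDerivAt.comp_ofReal).hasDerivWithinAt
  have hbound : ∀ t ∈ Icc a b, ‖-s * (t : ℂ) ^ (-s - 1)‖ ≤ ‖s‖ * a ^ (-s.re - 1) := by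
    intro t ht
    have ht0 : (0 : ℝ) < t := lt_of_lt_of_le (by linarith) ht.1
    rw [norm_mul, norm_neg]
    gcongr
    rw [Complex.norm_cpow_eq_rpow_re_of_pos ht0]
    have : (-s - 1).re = -s.re - 1 := by simp
    rw [this]
    exact Real.rpow_le_rpow_of_nonpos (by linarith) ht.1 (by linarith)
  have key := (convex_Icc a b).norm_image_sub_le_of_norm_hasDerivWithin_le hderiv hbound
    (left_mem_Icc.2 hab) (right_mem_Icc.2 hab)
  have hcast1 : ((2 * k + 1 : ℕ) : ℂ) = ((a : ℝ) : ℂ) := by push_cast [ha_def]; ring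
  have hcast2 : ((2 * k + 2 : ℕ) : ℂ) = ((b : ℝ) : ℂ) := by push_cast [hb_def]; ring
  have : ‖g a - g b‖ ≤ ‖s‖ * a ^ (-s.re - 1) := by
    rw [← norm_neg, neg_sub]
    calc ‖g b - g a‖ ≤ ‖s‖ * a ^ (-s.re - 1) * ‖b - a‖ := key
    _ = ‖s‖ * a ^ (-s.re - 1) := by
        simp only [ha_def, hb_def]
        rw [show (2 * (k:ℝ) + 2) - (2 * k + 1) = 1 by ring]
        simp
  calc ‖((2 * k + 1 : ℕ) : ℂ) ^ (-s) - ((2 * k + 2 : ℕ) : ℂ) ^ (-s)‖ = ‖g a - g b‖ := by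
        rw [hcast1, hcast2]
  _ ≤ ‖s‖ * a ^ (-s.re - 1) := this
  _ = ‖s‖ * (2 * (k : ℝ) + 1) ^ (-s.re - 1) := by rw [ha_def]

private lemma summable_aux {c δ : ℝ} (hδ : 0 < δ) :
    Summable (fun k : ℕ => c * (2 * (k : ℝ) + 1) ^ (-δ - 1)) := by
  apply Summable.mul_left
  have h1 : Summable (fun n : ℕ => (n : ℝ) ^ (-δ - 1)) := Real.summable_nat_rpow.2 (by linarith)
  have h2 := (summable_nat_add_iff (f := fun n : ℕ => (n : ℝ) ^ (-δ - 1)) 1).2 h1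
  have hsum : Summable (fun k : ℕ => ((k : ℝ) + 1) ^ (-δ - 1)) := by
    refine h2.congr fun k => ?_
    norm_num
  apply hsum.of_nonneg_of_le (fun k => by positivity)
  intro k
  apply Real.rpow_le_rpow_of_nonpos (by positivity) (by linarith [Nat.cast_nonneg (α := ℝ) k]) (by linarith)

private lemma etaF_differentiableOn : DifferentiableOn ℂ etaF {s : ℂ | 0 < s.re} := by
  intro s₀ hs₀
  have hs₀' : 0 < s₀.re := hs₀
  set r : ℝ := s₀.re / 2 with hr_def
  have hr : 0 < r := by positivity
  set U := Metric.ball s₀ r with hU_def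
  have hUopen : IsOpen U := Metric.isOpen_ball
  have hre : ∀ s ∈ U, r < s.re := by
    intro s hs
    have h1 : ‖s - s₀‖ < r := by simpa [hU_def, Metric.mem_ball, dist_eq_norm] using hs
    have h2 : |(s - s₀).re| ≤ ‖s - s₀‖ := Complex.abs_re_le_norm _
    have : |s.re - s₀.re| < r := by
      rw [← Complex.sub_re]; exact lt_of_le_of_lt h2 h1
    have := abs_lt.1 this
    simp only [hr_def] at *
    linarith
  have hnorm : ∀ s ∈ U, ‖s‖ < ‖s₀‖ + r := by
    intro s hs
    have h1 : ‖s - s₀‖ < r := by simpa [hU_def, Metric.mem_ball, dist_eq_norm] using hs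
    calc ‖s‖ = ‖s₀ + (s - s₀)‖ := by ring_nf
    _ ≤ ‖s₀‖ + ‖s - s₀‖ := norm_add_le _ _
    _ < ‖s₀‖ + r := by linarith
  have hdiff : DifferentiableOn ℂ
      (fun s : ℂ => ∑' k : ℕ, (((2 * k + 1 : ℕ) : ℂ) ^ (-s) - ((2 * k + 2 : ℕ) : ℂ) ^ (-s))) U := by
    refine differentiableOn_tsum_of_summable_norm
      (u := fun k : ℕ => (‖s₀‖ + r) * (2 * (k : ℝ) + 1) ^ (-r - 1))
      (summable_aux hr) (fun k => ?_) hUopen (fun k w hw => ?_)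
    · have hd : ∀ (m : ℕ), m ≠ 0 → Differentiable ℂ (fun s : ℂ => ((m : ℕ) : ℂ) ^ (-s)) :=
        fun m hm => Differentiable.const_cpow (differentiable_id.neg)
          (Or.inl (Nat.cast_ne_zero.2 hm))
      exact ((hd _ (by omega)).sub (hd _ (by omega))).differentiableOn
    · have hwre : 0 < w.re := lt_trans hr (hre w hw)
      calc ‖((2 * k + 1 : ℕ) : ℂ) ^ (-w) - ((2 * k + 2 : ℕ) : ℂ) ^ (-w)‖
          ≤ ‖w‖ * (2 * (k : ℝ) + 1) ^ (-w.re - 1) := etaF_term_bound k hwre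
      _ ≤ (‖s₀‖ + r) * (2 * (k : ℝ) + 1) ^ (-r - 1) := by
          have hb : (1:ℝ) ≤ 2 * (k : ℝ) + 1 := by
            have := Nat.cast_nonneg (α := ℝ) k; linarith
          apply mul_le_mul (le_of_lt (hnorm w hw))
            (Real.rpow_le_rpow_of_exponent_le hb (by linarith [hre w hw]))
            (by positivity) (by positivity)
  exact ((hdiff.differentiableAt (hUopen.mem_nhds (Metric.mem_ball_self hr))).differentiableWithinAt)

private lemma etaF_eq_of_one_lt {s : ℂ} (hs : 1 < s.re) :
    etaF s = (1 - 2 ^ (1 - s)) * riemannZeta s ∧ etaF s = ZMod.LFunction phi2 s := by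
  have hs0 : s ≠ 0 := fun h => by simp [h] at hs; linarith
  set w : ℕ → ℂ := fun n => (n : ℂ) ^ (-s) with hw_def
  have wcong : ∀ {m n : ℕ}, m = n → w m = w n := fun h => by rw [h]
  have hw : Summable w := by
    have := Complex.summable_one_div_nat_cpow.2 hs
    refine this.congr fun n => ?_
    simp [hw_def, Complex.cpow_neg, one_div]
  have hcomp : ∀ g : ℕ → ℕ, Function.Injective g → Summable (fun k => w (g k)) :=
    fun g hg => hw.comp_injective hg
  have he : Summable (fun k => w (2 * k)) := hcomp _ fun a b h => by omega
  have ho : Summable (fun k => w (2 * k + 1)) := hcomp _ fun a b h => by omega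
  have he2 : Summable (fun k => w (2 * k + 2)) := hcomp _ fun a b h => by omega
  have hw0 : w 0 = 0 := by
    simp only [hw_def, Nat.cast_zero]
    exact Complex.zero_cpow (neg_ne_zero.2 hs0)
  set A := ∑' k, w (2 * k + 1) with hA_def
  set B := ∑' k, w (2 * k + 2) with hB_def
  have hshift : ∑' k, w (2 * k) = B := by
    rw [tsum_eq_zero_add' (f := fun k => w (2 * k))
      (he2.congr fun k => (wcong (by omega)).symm)]
    rw [show w (2 * 0) = 0 from (wcong (by omega)).trans hw0, zero_add, hB_def]
    exact tsum_congr fun k => wcong (by omega)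
  have hzeta : riemannZeta s = B + A := by
    rw [zeta_eq_tsum_one_div_nat_cpow hs]
    have h1 : ∑' n : ℕ, 1 / (n : ℂ) ^ s = ∑' n, w n :=
      tsum_congr fun n => by simp [hw_def, Complex.cpow_neg, one_div]
    rw [h1, ← tsum_even_add_odd he ho, hshift]
  have hterm : ∀ n : ℕ, (2 : ℂ) ^ (1 - s) * w (n + 1) = 2 * w (2 * n + 2) := by
    intro n
    have h3 : w (2 * n + 2) = ((2 : ℕ) : ℂ) ^ (-s) * ((n + 1 : ℕ) : ℂ) ^ (-s) := by
      rw [wcong (show 2 * n + 2 = 2 * (n + 1) by ring)]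
      simp only [hw_def, Nat.cast_mul]
      exact Complex.natCast_mul_natCast_cpow 2 (n + 1) (-s)
    have h2 : (2 : ℂ) ^ (1 - s) = 2 * (2 : ℂ) ^ (-s) := by
      rw [sub_eq_add_neg, Complex.cpow_add _ _ two_ne_zero, Complex.cpow_one]
    rw [h3, h2, show ((2 : ℕ) : ℂ) = (2 : ℂ) from by norm_num]
    simp only [hw_def]
    ring
  have h2zeta : (2 : ℂ) ^ (1 - s) * riemannZeta s = 2 * B := by
    have hsum1 : Summable (fun n => w (n + 1)) := hcomp _ fun a b h => by omega
    have hsplit2 : ∑' n, w (n + 1) = A + B := by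
      rw [← tsum_even_add_odd (f := fun n => w (n + 1))
        (ho.congr fun k => (wcong (by omega)).symm)
        (he2.congr fun k => (wcong (by omega)).symm)]
    calc (2 : ℂ) ^ (1 - s) * riemannZeta s
        = (2 : ℂ) ^ (1 - s) * ∑' n, w (n + 1) := by rw [hsplit2, hzeta, add_comm]
    _ = ∑' n, (2 : ℂ) ^ (1 - s) * w (n + 1) := tsum_mul_left.symm
    _ = ∑' n, 2 * w (2 * n + 2) := tsum_congr hterm
    _ = 2 * B := tsum_mul_left
  have hetaF : etaF s = A - B := by
    have : etaF s = ∑' k, (w (2 * k + 1) - w (2 * k + 2)) := rfl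
    rw [this, ho.tsum_sub he2]
  constructor
  · rw [hetaF, sub_mul, one_mul, h2zeta, hzeta]; ring
  · rw [hetaF, ZMod.LFunction_eq_LSeries phi2 hs]
    set t : ℕ → ℂ := fun n => LSeries.term (fun n => phi2 n) s n with ht_def
    have tcong : ∀ {m n : ℕ}, m = n → t m = t n := fun h => by rw [h]
    have ht : Summable t := ZMod.LSeriesSummable_of_one_lt_re phi2 hs
    have hto : ∀ k : ℕ, t (2 * k + 1) = w (2 * k + 1) := by
      intro k
      rw [ht_def]
      simp only
      rw [LSeries.term_of_ne_zero (by omega), phi2_odd, hw_def]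
      simp [Complex.cpow_neg, one_div]
    have hte : ∀ k : ℕ, t (2 * k + 2) = -w (2 * k + 2) := by
      intro k
      rw [tcong (show 2 * k + 2 = 2 * (k + 1) by ring),
        (wcong (show 2 * (k + 1) = 2 * k + 2 by ring)).symm, ht_def]
      simp only
      rw [LSeries.term_of_ne_zero (by omega), phi2_even]
      simp only [hw_def]
      rw [Complex.cpow_neg]
      simp [neg_div, one_div]
    have hteS : Summable (fun k => t (2 * k)) := ht.comp_injective fun a b h => by omega
    have htoS : Summable (fun k => t (2 * k + 1)) := ht.comp_injective fun a b h => by omega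
    have ht0 : t 0 = 0 := LSeries.term_zero _ _
    have hevenSum : ∑' k, t (2 * k) = -B := by
      have hfe : (fun k : ℕ => t (2 * (k + 1))) = fun k : ℕ => -w (2 * k + 2) := by
        funext k
        rw [tcong (show 2 * (k + 1) = 2 * k + 2 by ring), hte k]
      have hS : Summable (fun k : ℕ => t (2 * (k + 1))) := by rw [hfe]; exact he2.neg
      rw [tsum_eq_zero_add' (f := fun k => t (2 * k)) hS]
      rw [show t (2 * 0) = 0 from (tcong (by omega)).trans ht0, zero_add, hB_def]
      rw [hfe, tsum_neg]
    have hoddSum : ∑' k, t (2 * k + 1) = A := tsum_congr hto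
    rw [LSeries, ← tsum_even_add_odd hteS htoS, hevenSum, hoddSum]
    ring

private lemma etaF_eq_LFunction {s : ℂ} (hs : 0 < s.re) : etaF s = ZMod.LFunction phi2 s := by
  have hUopen : IsOpen {z : ℂ | 0 < z.re} := isOpen_lt continuous_const Complex.continuous_re
  have h1 : AnalyticOnNhd ℂ etaF {z : ℂ | 0 < z.re} :=
    etaF_differentiableOn.analyticOnNhd hUopen
  have h2 : AnalyticOnNhd ℂ (ZMod.LFunction phi2) {z : ℂ | 0 < z.re} :=
    ((ZMod.differentiable_LFunction_of_sum_zero phi2_sum).differentiableOn).analyticOnNhd hUopen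
  have hpre : IsPreconnected {z : ℂ | 0 < z.re} := (convex_halfSpace_re_gt 0).isPreconnected
  have h2mem : (2 : ℂ) ∈ {z : ℂ | 0 < z.re} := by norm_num
  have hOopen : IsOpen {z : ℂ | 1 < z.re} := isOpen_lt continuous_const Complex.continuous_re
  have hfg : etaF =ᶠ[nhds (2 : ℂ)] ZMod.LFunction phi2 := by
    filter_upwards [hOopen.mem_nhds (by norm_num)] with z hz
    exact (etaF_eq_of_one_lt hz).2
  exact h1.eqOn_of_preconnected_of_eventuallyEq h2 hpre h2mem hfg hs

private lemma LFunction_eq_zeta {s : ℂ} (hs : s ≠ 1) :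
    ZMod.LFunction phi2 s = (1 - 2 ^ (1 - s)) * riemannZeta s := by
  have hUopen : IsOpen (({(1 : ℂ)}ᶜ : Set ℂ)) := isOpen_compl_singleton
  have h1 : AnalyticOnNhd ℂ (ZMod.LFunction phi2) (({(1 : ℂ)}ᶜ : Set ℂ)) :=
    ((ZMod.differentiable_LFunction_of_sum_zero phi2_sum).differentiableOn).analyticOnNhd hUopen
  have h2 : AnalyticOnNhd ℂ (fun z => (1 - 2 ^ (1 - z)) * riemannZeta z) (({(1 : ℂ)}ᶜ : Set ℂ)) := by
    refine DifferentiableOn.analyticOnNhd (fun z hz => ?_) hUopen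
    have hd1 : DifferentiableAt ℂ (fun z : ℂ => 1 - (2 : ℂ) ^ (1 - z)) z :=
      (differentiableAt_const _).sub
        (((differentiableAt_const _).sub differentiableAt_id).const_cpow (Or.inl two_ne_zero))
    exact (hd1.mul (differentiableAt_riemannZeta hz)).differentiableWithinAt
  have hpre : IsPreconnected (({(1 : ℂ)}ᶜ : Set ℂ)) :=
    (isConnected_compl_singleton_of_one_lt_rank (by simp) _).isPreconnected
  have h2mem : (2 : ℂ) ∈ (({(1 : ℂ)}ᶜ : Set ℂ)) := by norm_num
  have hOopen : IsOpen {z : ℂ | 1 < z.re} := isOpen_lt continuous_const Complex.continuous_re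
  have hfg : ZMod.LFunction phi2 =ᶠ[nhds (2 : ℂ)]
      fun z => (1 - 2 ^ (1 - z)) * riemannZeta z := by
    filter_upwards [hOopen.mem_nhds (by norm_num)] with z hz
    exact (etaF_eq_of_one_lt hz).2.symm.trans (etaF_eq_of_one_lt hz).1
  exact h1.eqOn_of_preconnected_of_eventuallyEq h2 hpre h2mem hfg hs

private lemma riemannZeta_ne_zero_of_strip {x : ℝ} (hx0 : 0 < x) (hx1 : x < 1) :
    riemannZeta (x : ℂ) ≠ 0 := by
  have hre : 0 < (x : ℂ).re := by simpa using hx0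
  have hne1 : (x : ℂ) ≠ 1 := by
    intro h
    rw [show (1 : ℂ) = ((1 : ℝ) : ℂ) from by norm_num] at h
    exact absurd (Complex.ofReal_inj.1 h) (by linarith)
  have h1 : etaF (x : ℂ) = (1 - 2 ^ (1 - (x : ℂ))) * riemannZeta (x : ℂ) :=
    (etaF_eq_LFunction hre).trans (LFunction_eq_zeta hne1)
  set r : ℕ → ℝ := fun k => (2 * (k : ℝ) + 1) ^ (-x) - (2 * (k : ℝ) + 2) ^ (-x) with hr_def
  have hterm : ∀ k : ℕ, ((2 * k + 1 : ℕ) : ℂ) ^ (-(x : ℂ)) - ((2 * k + 2 : ℕ) : ℂ) ^ (-(x : ℂ))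
      = ((r k : ℝ) : ℂ) := by
    intro k
    have hk : (0 : ℝ) ≤ (k : ℝ) := Nat.cast_nonneg k
    rw [hr_def]
    simp only
    rw [Complex.ofReal_sub, Complex.ofReal_cpow (by linarith) (-x),
      Complex.ofReal_cpow (by linarith) (-x)]
    push_cast
    ring_nf
  have hnonneg : ∀ k, 0 ≤ r k := by
    intro k
    have hk : (0 : ℝ) ≤ (k : ℝ) := Nat.cast_nonneg k
    rw [hr_def, sub_nonneg]
    exact Real.rpow_le_rpow_of_nonpos (by linarith) (by linarith) (by linarith)
  have hrs : Summable r := by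
    have hb : Summable (fun k : ℕ => ‖(x : ℂ)‖ * (2 * (k : ℝ) + 1) ^ (-x - 1)) := by
      have := summable_aux (c := ‖(x : ℂ)‖) (δ := x) hx0
      exact this
    refine hb.of_nonneg_of_le hnonneg fun k => ?_
    have := etaF_term_bound k hre
    rw [hterm k] at this
    rw [Complex.norm_real, Real.norm_eq_abs, _root_.abs_of_nonneg (hnonneg k)] at this
    simpa using this
  have hpos0 : 0 < r 0 := by
    rw [hr_def]
    simp only [Nat.cast_zero, mul_zero, zero_add]
    rw [Real.one_rpow, sub_pos]
    exact Real.rpow_lt_one_of_one_lt_of_neg one_lt_two (by linarith)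
  have hS : 0 < ∑' k, r k := hrs.tsum_pos hnonneg 0 hpos0
  have hEta : etaF (x : ℂ) = ((∑' k, r k : ℝ) : ℂ) := by
    rw [etaF, Complex.ofReal_tsum]
    exact tsum_congr hterm
  intro h0
  rw [h0, mul_zero] at h1
  rw [h1] at hEta
  exact absurd (Complex.ofReal_eq_zero.1 hEta.symm) (ne_of_gt hS)

/-- The only real zeros of the Riemann zeta function are the trivial zeros: for a real
number `x`, `ζ x = 0` iff `x = -2 (n+1)` for some natural number `n`. -/
theorem riemannZeta_real_zero_iff (x : ℝ) :
    riemannZeta (x : ℂ) = 0 ↔ ∃ n : ℕ, x = -2 * ((n : ℝ) + 1) := by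
  constructor
  · intro h
    by_contra hn
    push_neg at hn
    rcases lt_trichotomy x 0 with hx | hx | hx
    · -- x < 0 : use the functional equation
      set s : ℂ := 1 - (x : ℂ) with hs_def
      have hsre : s.re = 1 - x := by simp [hs_def]
      have hsnat : ∀ n : ℕ, s ≠ -n := by
        intro n hcon
        have h1 : s.re = -(n : ℝ) := by rw [hcon]; simp
        rw [hsre] at h1
        have := Nat.cast_nonneg (α := ℝ) n
        linarith
      have hsne1 : s ≠ 1 := by
        intro hcon
        have h1 : s.re = 1 := by rw [hcon]; simp
        rw [hsre] at h1
        linarith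
      have hfe := riemannZeta_one_sub hsnat hsne1
      have h1s : (1 : ℂ) - s = (x : ℂ) := by rw [hs_def]; ring
      rw [h1s, h] at hfe
      have hπ : (Real.pi : ℂ) ≠ 0 := Complex.ofReal_ne_zero.2 Real.pi_ne_zero
      have hcosne : Complex.cos (↑Real.pi * s / 2) ≠ 0 := by
        intro hcos
        rcases Complex.cos_eq_zero_iff.1 hcos with ⟨kk, hk⟩
        have h2' : (Real.pi : ℂ) * s = (Real.pi : ℂ) * (2 * kk + 1) := by
          linear_combination (2 : ℂ) * hk
        have hs_eq : s = 2 * kk + 1 := mul_left_cancel₀ hπ h2'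
        rw [hs_def] at hs_eq
        have hxc : (x : ℂ) = (((-2 * kk : ℤ) : ℝ) : ℂ) := by
          push_cast
          linear_combination -hs_eq
        have xr : x = ((-2 * kk : ℤ) : ℝ) := Complex.ofReal_inj.1 hxc
        have hkpos : 1 ≤ kk := by
          by_contra h'
          push_neg at h'
          have h'' : (kk : ℝ) ≤ 0 := by exact_mod_cast Int.lt_add_one_iff.mp (by exact_mod_cast h')
          rw [xr] at hx
          push_cast at hx
          linarith
        set n : ℕ := kk.toNat - 1 with hn_def
        have h1 : (n : ℤ) + 1 = kk := by omega
        refine hn n ?_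
        rw [xr]
        have h2 : ((n : ℝ) + 1) = (kk : ℝ) := by exact_mod_cast congrArg (fun z : ℤ => (z : ℝ)) h1
        push_cast
        rw [← h2]
      have hζs : riemannZeta s ≠ 0 := riemannZeta_ne_zero_of_one_le_re (by rw [hsre]; linarith)
      have hΓ : Complex.Gamma s ≠ 0 := Complex.Gamma_ne_zero hsnat
      have hbase : (2 * (Real.pi : ℂ)) ≠ 0 := mul_ne_zero two_ne_zero hπ
      have hpow : (2 * (Real.pi : ℂ)) ^ (-s) ≠ 0 := by
        rw [Complex.cpow_def_of_ne_zero hbase]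
        exact Complex.exp_ne_zero _
      exact (mul_ne_zero (mul_ne_zero (mul_ne_zero (mul_ne_zero two_ne_zero hpow) hΓ)
        hcosne) hζs) hfe.symm
    · rw [hx, Complex.ofReal_zero, riemannZeta_zero] at h
      norm_num at h
    · rcases lt_or_ge x 1 with hx1 | hx1
      · exact riemannZeta_ne_zero_of_strip hx hx1 h
      · exact riemannZeta_ne_zero_of_one_le_re (by simpa using hx1) h
  · rintro ⟨n, rfl⟩
    have := riemannZeta_neg_two_mul_nat_add_one n
    convert this using 2
    push_cast
    ring
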